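/- arXiv:0809.2114 — 5 statements merged into one kernel-verified Lean document; each statement's English description precedes it below -/
import Mathlib

section
/- The function θ₀(R) = (−1 − 8R² + 24R⁴ log R + 8R⁶ + R⁸)/(4 R^{3/2} (1+R²)²) satisfies 𝓛θ₀ = 0 on (0,∞), and the Wronskian with φ₀ is constantly equal to one: φ₀(R) θ₀'(R) − φ₀'(R) θ₀(R) = 1 for all R > 0. -/
/- STATEMENT 4: θ₀(R) = (−1 − 8R² + 24R⁴ log R + 8R⁶ + R⁸)/(4R^{3/2}(1+R²)²)
satisfies 𝓛θ₀ = 0 on (0,∞), where 𝓛 = -d²/dR² + 15/(4R²) - 24/(1+R²)², and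
its Wronskian with φ₀(R) = R^{5/2}/(1+R²)² is identically one. -/

/-- square-root facts for a positive real. -/
lemma sqrt_facts {R : ℝ} (hR : 0 < R) : ∃ s : ℝ, 0 < s ∧ s ^ 2 = R ∧
    R ^ ((1:ℝ)/2) = s ∧ R ^ ((3:ℝ)/2) = R * s ∧ R ^ ((5:ℝ)/2) = R ^ 2 * s := by
  refine ⟨R ^ ((1:ℝ)/2), Real.rpow_pos_of_pos hR _, ?_, rfl, ?_, ?_⟩
  · rw [← Real.rpow_natCast (R ^ ((1:ℝ)/2)) 2, ← Real.rpow_mul hR.le]; norm_num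
  · rw [show (3:ℝ)/2 = 1 + 1/2 by norm_num, Real.rpow_add hR, Real.rpow_one]
  · rw [show (5:ℝ)/2 = 2 + 1/2 by norm_num, Real.rpow_add hR,
      show (2:ℝ) = ((2:ℕ):ℝ) by norm_num, Real.rpow_natCast]

/-- The zero-energy eigenfunction `φ₀(R) = R^{5/2}/(1+R²)²`. -/
noncomputable def phi0 (R : ℝ) : ℝ := R ^ ((5 : ℝ) / 2) / (1 + R ^ 2) ^ 2

/-- The second zero-energy solution
`θ₀(R) = (−1 − 8R² + 24R⁴ log R + 8R⁶ + R⁸)/(4R^{3/2}(1+R²)²)`. -/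
noncomputable def theta0 (R : ℝ) : ℝ :=
  (-1 - 8 * R ^ 2 + 24 * R ^ 4 * Real.log R + 8 * R ^ 6 + R ^ 8)
    / (4 * R ^ ((3 : ℝ) / 2) * (1 + R ^ 2) ^ 2)

/-- Explicit derivative of `theta0`. -/
noncomputable def theta0d (R : ℝ) : ℝ :=
  (6 + 6 * R ^ 2 + 208 * R ^ 4 + 240 * R ^ 4 * Real.log R + 240 * R ^ 6
      - 144 * R ^ 6 * Real.log R + 42 * R ^ 8 + 10 * R ^ 10)
    / (16 * R ^ ((5 : ℝ) / 2) * (1 + R ^ 2) ^ 3)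

/-- Explicit derivative of `phi0`. -/
noncomputable def phi0d (R : ℝ) : ℝ :=
  (5 / 2 * R ^ ((3 : ℝ) / 2) * (1 + R ^ 2) ^ 2 - R ^ ((5 : ℝ) / 2) * (4 * R * (1 + R ^ 2)))
    / ((1 + R ^ 2) ^ 2) ^ 2

lemma phi0_hasDerivAt {R : ℝ} (hR : 0 < R) : HasDerivAt phi0 (phi0d R) R := by
  have hne : ((1 + R ^ 2) ^ 2 : ℝ) ≠ 0 := by positivity
  have h := (Real.hasDerivAt_rpow_const (p := (5:ℝ)/2) (Or.inl hR.ne')).div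
    (((hasDerivAt_pow 2 R).const_add 1).pow 2) hne
  have he : phi0 = fun r : ℝ => r ^ ((5:ℝ)/2) / (1 + r ^ 2) ^ 2 := rfl
  rw [he]
  refine h.congr_deriv (Eq.symm ?_)
  rw [show (5:ℝ)/2 - 1 = 3/2 by norm_num]
  unfold phi0d
  obtain ⟨s, hs0, hs2, h12, h32, h52⟩ := sqrt_facts hR
  rw [h32, h52, ← hs2]
  have h1 : (0:ℝ) < 1 + (s ^ 2) ^ 2 := by positivity
  simp only [Pi.pow_apply]
  field_simp
  ring

lemma theta0_hasDerivAt {R : ℝ} (hR : 0 < R) : HasDerivAt theta0 (theta0d R) R := by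
  have hne : (4 * R ^ ((3:ℝ)/2) * (1 + R ^ 2) ^ 2 : ℝ) ≠ 0 := by positivity
  have hN : HasDerivAt
      (fun r : ℝ => -1 - 8 * r ^ 2 + 24 * r ^ 4 * Real.log r + 8 * r ^ 6 + r ^ 8)
      (-16*R + 24*R^3 + 96*R^3*Real.log R + 48*R^5 + 8*R^7) R := by
    have h := ((((hasDerivAt_const R (-1:ℝ)).sub ((hasDerivAt_pow 2 R).const_mul 8)).add
        (((hasDerivAt_pow 4 R).const_mul 24).mul (Real.hasDerivAt_log hR.ne'))).add
        ((hasDerivAt_pow 6 R).const_mul 8)).add (hasDerivAt_pow 8 R)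
    refine h.congr_deriv (Eq.symm ?_)
    field_simp
    ring
  have hD : HasDerivAt (fun r : ℝ => 4 * r ^ ((3:ℝ)/2) * (1 + r ^ 2) ^ 2)
      (6 * R ^ ((1:ℝ)/2) * (1 + R ^ 2) ^ 2 + 16 * R * R ^ ((3:ℝ)/2) * (1 + R ^ 2)) R := by
    have h := ((Real.hasDerivAt_rpow_const (p := (3:ℝ)/2) (Or.inl hR.ne')).const_mul 4).mul
      (((hasDerivAt_pow 2 R).const_add 1).pow 2)
    refine h.congr_deriv (Eq.symm ?_)
    rw [show (3:ℝ)/2 - 1 = 1/2 by norm_num]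
    obtain ⟨s, hs0, hs2, h12, h32, h52⟩ := sqrt_facts hR
    rw [h12, h32]
    norm_num
    ring
  have h := hN.div hD hne
  have he : theta0 = fun r : ℝ =>
      (-1 - 8 * r ^ 2 + 24 * r ^ 4 * Real.log r + 8 * r ^ 6 + r ^ 8)
        / (4 * r ^ ((3:ℝ)/2) * (1 + r ^ 2) ^ 2) := rfl
  rw [he]
  refine h.congr_deriv (Eq.symm ?_)
  unfold theta0d
  obtain ⟨s, hs0, hs2, h12, h32, h52⟩ := sqrt_facts hR
  rw [h12, h32, h52, ← hs2]
  have h1 : (0:ℝ) < 1 + (s ^ 2) ^ 2 := by positivity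
  field_simp
  ring

lemma theta0d_hasDerivAt {R : ℝ} (hR : 0 < R) :
    HasDerivAt theta0d ((15 / (4 * R ^ 2) - 24 / (1 + R ^ 2) ^ 2) * theta0 R) R := by
  have hne : (16 * R ^ ((5:ℝ)/2) * (1 + R ^ 2) ^ 3 : ℝ) ≠ 0 := by positivity
  have hM : HasDerivAt
      (fun r : ℝ => 6 + 6 * r ^ 2 + 208 * r ^ 4 + 240 * r ^ 4 * Real.log r + 240 * r ^ 6
        - 144 * r ^ 6 * Real.log r + 42 * r ^ 8 + 10 * r ^ 10)
      (12*R + 1072*R^3 + 960*R^3*Real.log R + 1296*R^5 - 864*R^5*Real.log R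
        + 336*R^7 + 100*R^9) R := by
    have h := (((((((hasDerivAt_const R (6:ℝ)).add ((hasDerivAt_pow 2 R).const_mul 6)).add
        ((hasDerivAt_pow 4 R).const_mul 208)).add
        (((hasDerivAt_pow 4 R).const_mul 240).mul (Real.hasDerivAt_log hR.ne'))).add
        ((hasDerivAt_pow 6 R).const_mul 240)).sub
        (((hasDerivAt_pow 6 R).const_mul 144).mul (Real.hasDerivAt_log hR.ne'))).add
        ((hasDerivAt_pow 8 R).const_mul 42)).add ((hasDerivAt_pow 10 R).const_mul 10)
    refine h.congr_deriv (Eq.symm ?_)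
    field_simp
    ring
  have hE : HasDerivAt (fun r : ℝ => 16 * r ^ ((5:ℝ)/2) * (1 + r ^ 2) ^ 3)
      (40 * R ^ ((3:ℝ)/2) * (1 + R ^ 2) ^ 3 + 96 * R * R ^ ((5:ℝ)/2) * (1 + R ^ 2) ^ 2) R := by
    have h := ((Real.hasDerivAt_rpow_const (p := (5:ℝ)/2) (Or.inl hR.ne')).const_mul 16).mul
      (((hasDerivAt_pow 2 R).const_add 1).pow 3)
    refine h.congr_deriv (Eq.symm ?_)
    rw [show (5:ℝ)/2 - 1 = 3/2 by norm_num]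
    norm_num
    ring
  have h := hM.div hE hne
  have he : theta0d = fun r : ℝ =>
      (6 + 6 * r ^ 2 + 208 * r ^ 4 + 240 * r ^ 4 * Real.log r + 240 * r ^ 6
        - 144 * r ^ 6 * Real.log r + 42 * r ^ 8 + 10 * r ^ 10)
        / (16 * r ^ ((5:ℝ)/2) * (1 + r ^ 2) ^ 3) := rfl
  rw [he]
  refine h.congr_deriv (Eq.symm ?_)
  unfold theta0
  obtain ⟨s, hs0, hs2, h12, h32, h52⟩ := sqrt_facts hR
  rw [h32, h52, ← hs2]
  have h1 : (0:ℝ) < 1 + (s ^ 2) ^ 2 := by positivity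
  field_simp
  ring

theorem theta0_zero_mode_and_wronskian :
    ∀ R : ℝ, 0 < R →
      deriv (deriv theta0) R = (15 / (4 * R ^ 2) - 24 / (1 + R ^ 2) ^ 2) * theta0 R ∧
      phi0 R * deriv theta0 R - deriv phi0 R * theta0 R = 1 := by
  intro R hR
  have hde : deriv theta0 =ᶠ[nhds R] theta0d := by
    filter_upwards [Ioi_mem_nhds hR] with x hx
    exact (theta0_hasDerivAt hx).deriv
  constructor
  · rw [hde.deriv_eq, (theta0d_hasDerivAt hR).deriv]
  · rw [(theta0_hasDerivAt hR).deriv, (phi0_hasDerivAt hR).deriv]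
    unfold phi0 phi0d theta0 theta0d
    obtain ⟨s, hs0, hs2, h12, h32, h52⟩ := sqrt_facts hR
    rw [h32, h52, ← hs2]
    have h1 : (0:ℝ) < 1 + (s ^ 2) ^ 2 := by positivity
    field_simp
    ring
end

section
/- The following two integrals involving the zero-energy eigenfunction evaluate exactly: ∫₀^∞ ( R φ₀'(R) )² dR = 17/120 and ∫₀^∞ R φ₀'(R) φ₀(R) dR = −1/12. In particular ⟨Rφ₀', φ₀⟩ = −(1/2)‖φ₀‖², which gives the diagonal entry K_{ee} = −1/12 of the transference operator. -/
open MeasureTheory Set Filter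

lemma deriv_phi0_eq {R : ℝ} (hR : 0 < R) :
    deriv phi0 R = R ^ ((3 : ℝ) / 2) * (5 - 3 * R ^ 2) / (2 * (1 + R ^ 2) ^ 3) := by
  have hden : ((1 : ℝ) + R ^ 2) ^ 2 ≠ 0 := by positivity
  have hnum : HasDerivAt (fun x : ℝ => x ^ ((5 : ℝ) / 2))
      ((5 / 2) * R ^ ((5 : ℝ) / 2 - 1)) R :=
    Real.hasDerivAt_rpow_const (Or.inl hR.ne')
  have h2 : HasDerivAt (fun x : ℝ => 1 + x ^ 2) (2 * R) R := by
    simpa using (hasDerivAt_pow 2 R).const_add 1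
  have hd : HasDerivAt (fun x : ℝ => (1 + x ^ 2) ^ 2) (2 * (1 + R ^ 2) * (2 * R)) R := by
    have := h2.pow (n := 2)
    simp at this; exact this
  have hD : HasDerivAt phi0
      (((5 / 2) * R ^ ((5 : ℝ) / 2 - 1) * (1 + R ^ 2) ^ 2 -
        R ^ ((5 : ℝ) / 2) * (2 * (1 + R ^ 2) * (2 * R))) / ((1 + R ^ 2) ^ 2) ^ 2) R :=
    hnum.div hd hden
  rw [hD.deriv]
  have h52 : R ^ ((5 : ℝ) / 2) = R ^ ((3 : ℝ) / 2) * R := by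
    rw [show (5 : ℝ) / 2 = 3 / 2 + 1 by norm_num, Real.rpow_add hR, Real.rpow_one]
  have h32 : (5 : ℝ) / 2 - 1 = 3 / 2 := by norm_num
  rw [h32, h52]
  have hne : (1 : ℝ) + R ^ 2 ≠ 0 := by positivity
  field_simp
  ring

lemma hasDerivAt_inv_one_add_sq (x : ℝ) :
    HasDerivAt (fun y : ℝ => (1 + y ^ 2)⁻¹) (-(2 * x) / (1 + x ^ 2) ^ 2) x := by
  have h2 : HasDerivAt (fun y : ℝ => 1 + y ^ 2) (2 * x) x := by
    simpa using (hasDerivAt_pow 2 x).const_add 1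
  exact h2.inv (by positivity)

lemma tendsto_inv_one_add_sq :
    Tendsto (fun x : ℝ => (1 + x ^ 2)⁻¹) atTop (nhds 0) := by
  apply tendsto_inv_atTop_zero.comp
  apply tendsto_atTop_add_const_left
  exact tendsto_pow_atTop (by norm_num)

lemma intA : (∫ x in Set.Ioi (0 : ℝ),
    x ^ 5 * (5 - 3 * x ^ 2) ^ 2 / (4 * (1 + x ^ 2) ^ 6)) = 17 / 120 := by
  set F : ℝ → ℝ := fun x =>
    (-192 * ((1 + x ^ 2)⁻¹) ^ 5 + 660 * ((1 + x ^ 2)⁻¹) ^ 4 +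
      -845 * ((1 + x ^ 2)⁻¹) ^ 3 + 495 * ((1 + x ^ 2)⁻¹) ^ 2 +
      -135 * (1 + x ^ 2)⁻¹) / 120 with hF
  have hderiv : ∀ x ∈ Set.Ici (0 : ℝ),
      HasDerivAt F (x ^ 5 * (5 - 3 * x ^ 2) ^ 2 / (4 * (1 + x ^ 2) ^ 6)) x := by
    intro x _
    have h := hasDerivAt_inv_one_add_sq x
    have H := (((((h.pow (n := 5)).const_mul (-192 : ℝ)).add
      ((h.pow (n := 4)).const_mul 660)).add
      ((h.pow (n := 3)).const_mul (-845))).add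
      ((h.pow (n := 2)).const_mul 495)).add (h.const_mul (-135))
    have H' := H.div_const 120
    refine H'.congr_deriv ?_
    have hne : (1 : ℝ) + x ^ 2 ≠ 0 := by positivity
    simp only [inv_pow]
    field_simp
    ring
  have hpos : ∀ x ∈ Set.Ioi (0 : ℝ),
      0 ≤ x ^ 5 * (5 - 3 * x ^ 2) ^ 2 / (4 * (1 + x ^ 2) ^ 6) := by
    intro x hx
    have : (0:ℝ) < x := hx
    positivity
  have htend : Tendsto F atTop (nhds 0) := by
    have hc : Continuous fun s : ℝ =>
        (-192 * s ^ 5 + 660 * s ^ 4 + -845 * s ^ 3 + 495 * s ^ 2 + -135 * s) / 120 := by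
      continuity
    simpa [hF, Function.comp_def] using (hc.tendsto 0).comp tendsto_inv_one_add_sq
  rw [integral_Ioi_of_hasDerivAt_of_nonneg' hderiv hpos htend]
  norm_num [hF]

lemma intC : (∫ x in Set.Ioi (0 : ℝ), x ^ 5 / (1 + x ^ 2) ^ 4) = 1 / 6 := by
  set F : ℝ → ℝ := fun x =>
    (-1 * ((1 + x ^ 2)⁻¹) ^ 3 + 3 * ((1 + x ^ 2)⁻¹) ^ 2 + -3 * (1 + x ^ 2)⁻¹) / 6 with hF
  have hderiv : ∀ x ∈ Set.Ici (0 : ℝ),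
      HasDerivAt F (x ^ 5 / (1 + x ^ 2) ^ 4) x := by
    intro x _
    have h := hasDerivAt_inv_one_add_sq x
    have H := (((h.pow (n := 3)).const_mul (-1 : ℝ)).add
      ((h.pow (n := 2)).const_mul 3)).add (h.const_mul (-3))
    have H' := H.div_const 6
    refine H'.congr_deriv ?_
    have hne : (1 : ℝ) + x ^ 2 ≠ 0 := by positivity
    simp only [inv_pow]
    field_simp
    ring
  have hpos : ∀ x ∈ Set.Ioi (0 : ℝ), 0 ≤ x ^ 5 / (1 + x ^ 2) ^ 4 := by
    intro x hx
    have : (0:ℝ) < x := hx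
    positivity
  have htend : Tendsto F atTop (nhds 0) := by
    have hc : Continuous fun s : ℝ =>
        (-1 * s ^ 3 + 3 * s ^ 2 + -3 * s) / 6 := by continuity
    simpa [hF, Function.comp_def] using (hc.tendsto 0).comp tendsto_inv_one_add_sq
  rw [integral_Ioi_of_hasDerivAt_of_nonneg' hderiv hpos htend]
  norm_num [hF]

lemma intB : (∫ x in Set.Ioi (0 : ℝ),
    x ^ 5 * (5 - 3 * x ^ 2) / (2 * (1 + x ^ 2) ^ 5)) = -(1 / 12) := by
  set F : ℝ → ℝ := fun x =>
    (-6 * ((1 + x ^ 2)⁻¹) ^ 4 + 19 * ((1 + x ^ 2)⁻¹) ^ 3 +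
      -21 * ((1 + x ^ 2)⁻¹) ^ 2 + 9 * (1 + x ^ 2)⁻¹) / 12 with hF
  have hderiv : ∀ x ∈ Set.Ici (0 : ℝ),
      HasDerivAt F (x ^ 5 * (5 - 3 * x ^ 2) / (2 * (1 + x ^ 2) ^ 5)) x := by
    intro x _
    have h := hasDerivAt_inv_one_add_sq x
    have H := ((((h.pow (n := 4)).const_mul (-6 : ℝ)).add
      ((h.pow (n := 3)).const_mul 19)).add
      ((h.pow (n := 2)).const_mul (-21))).add (h.const_mul 9)
    have H' := H.div_const 12
    refine H'.congr_deriv ?_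
    have hne : (1 : ℝ) + x ^ 2 ≠ 0 := by positivity
    simp only [inv_pow]
    field_simp
    ring
  have hint : IntegrableOn
      (fun x : ℝ => x ^ 5 * (5 - 3 * x ^ 2) / (2 * (1 + x ^ 2) ^ 5)) (Set.Ioi 0) := by
    apply Integrable.mono' ((integrable_inv_one_add_sq.const_mul (5 / 2)).integrableOn
      (s := Set.Ioi 0))
    · apply Continuous.aestronglyMeasurable
      apply Continuous.div (by continuity) (by continuity)
      intro x; positivity
    · rw [ae_restrict_iff' measurableSet_Ioi]
      refine Filter.Eventually.of_forall fun x hx => ?_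
      have hx0 : (0 : ℝ) < x := hx
      have hden : (0 : ℝ) < 2 * (1 + x ^ 2) ^ 5 := by positivity
      rw [Real.norm_eq_abs, abs_div, abs_of_pos hden]
      rw [div_le_iff₀ hden]
      have habs : |x ^ 5 * (5 - 3 * x ^ 2)| ≤ x ^ 5 * (5 + 3 * x ^ 2) := by
        rw [abs_mul, abs_of_pos (by positivity)]
        gcongr
        exact abs_le.2 ⟨by nlinarith, by nlinarith⟩
      calc |x ^ 5 * (5 - 3 * x ^ 2)| ≤ x ^ 5 * (5 + 3 * x ^ 2) := habs
        _ ≤ 5 / 2 * (1 + x ^ 2)⁻¹ * (2 * (1 + x ^ 2) ^ 5) := by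
            have hx2 : (0:ℝ) < 1 + x ^ 2 := by positivity
            have h1 : 5 / 2 * (1 + x ^ 2)⁻¹ * (2 * (1 + x ^ 2) ^ 5)
                = 5 * (1 + x ^ 2) ^ 4 := by field_simp
            rw [h1]
            nlinarith [sq_nonneg (x ^ 2 - x), sq_nonneg (x ^ 3 - x ^ 2), sq_nonneg x,
              sq_nonneg (x - 1), sq_nonneg (x ^ 2 - 1), pow_pos hx0 4, pow_pos hx0 2,
              sq_nonneg (x ^ 3 - x), sq_nonneg (x ^ 4 - x ^ 3)]
  have htend : Tendsto F atTop (nhds 0) := by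
    have hc : Continuous fun s : ℝ =>
        (-6 * s ^ 4 + 19 * s ^ 3 + -21 * s ^ 2 + 9 * s) / 12 := by continuity
    simpa [hF, Function.comp_def] using (hc.tendsto 0).comp tendsto_inv_one_add_sq
  rw [integral_Ioi_of_hasDerivAt_of_tendsto' hderiv hint htend]
  norm_num [hF]

lemma rpow_half_sq {x : ℝ} (hx : 0 < x) : (x ^ ((3 : ℝ) / 2)) ^ 2 = x ^ 3 := by
  rw [← Real.rpow_natCast (x ^ ((3 : ℝ) / 2)) 2, ← Real.rpow_mul hx.le]
  norm_num

lemma rpow_35 {x : ℝ} (hx : 0 < x) : x ^ ((3 : ℝ) / 2) * x ^ ((5 : ℝ) / 2) = x ^ 4 := by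
  rw [← Real.rpow_add hx]
  norm_num

lemma rpow_55 {x : ℝ} (hx : 0 < x) : (x ^ ((5 : ℝ) / 2)) ^ 2 = x ^ 5 := by
  rw [← Real.rpow_natCast (x ^ ((5 : ℝ) / 2)) 2, ← Real.rpow_mul hx.le]
  norm_num

theorem phi0_scaling_integrals :
    (∫ R in Set.Ioi (0 : ℝ), (R * deriv phi0 R) ^ 2) = 17 / 120 ∧
    (∫ R in Set.Ioi (0 : ℝ), R * deriv phi0 R * phi0 R) = -(1 / 12) ∧
    (∫ R in Set.Ioi (0 : ℝ), R * deriv phi0 R * phi0 R)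
      = -(1 / 2) * ∫ R in Set.Ioi (0 : ℝ), (phi0 R) ^ 2 := by
  have hA : (∫ R in Set.Ioi (0 : ℝ), (R * deriv phi0 R) ^ 2) = 17 / 120 := by
    rw [← intA]
    apply setIntegral_congr_fun measurableSet_Ioi
    intro x hx
    have hx0 : (0 : ℝ) < x := hx
    have hne : (1 : ℝ) + x ^ 2 ≠ 0 := by positivity
    simp only [deriv_phi0_eq hx0]
    rw [show (x * (x ^ ((3:ℝ)/2) * (5 - 3 * x ^ 2) / (2 * (1 + x ^ 2) ^ 3))) ^ 2
        = x ^ 2 * (x ^ ((3:ℝ)/2)) ^ 2 * (5 - 3 * x ^ 2) ^ 2 / (4 * (1 + x ^ 2) ^ 6) by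
          field_simp; ring, rpow_half_sq hx0]
    ring
  have hB : (∫ R in Set.Ioi (0 : ℝ), R * deriv phi0 R * phi0 R) = -(1 / 12) := by
    rw [← intB]
    apply setIntegral_congr_fun measurableSet_Ioi
    intro x hx
    have hx0 : (0 : ℝ) < x := hx
    have hne : (1 : ℝ) + x ^ 2 ≠ 0 := by positivity
    simp only [deriv_phi0_eq hx0, phi0]
    rw [show x * (x ^ ((3:ℝ)/2) * (5 - 3 * x ^ 2) / (2 * (1 + x ^ 2) ^ 3)) *
        (x ^ ((5:ℝ)/2) / (1 + x ^ 2) ^ 2)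
        = x * (x ^ ((3:ℝ)/2) * x ^ ((5:ℝ)/2)) * (5 - 3 * x ^ 2) /
          (2 * (1 + x ^ 2) ^ 5) by field_simp, rpow_35 hx0]
    ring
  have hC : (∫ R in Set.Ioi (0 : ℝ), (phi0 R) ^ 2) = 1 / 6 := by
    rw [← intC]
    apply setIntegral_congr_fun measurableSet_Ioi
    intro x hx
    have hx0 : (0 : ℝ) < x := hx
    have hne : (1 : ℝ) + x ^ 2 ≠ 0 := by positivity
    simp only [phi0]
    rw [div_pow, rpow_55 hx0, ← pow_mul]
  exact ⟨hA, hB, by rw [hB, hC]; norm_num⟩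
end

section
/- The diagonal matrix element of the potential correction against the zero-energy eigenfunction evaluates exactly: ∫₀^∞ ( −12 R²(1−R²)/(1+R²)³ ) φ₀(R)² dR = 1/10. Consequently, dividing by ‖φ₀‖² = 1/6, the entry 𝒥_{ee} of the operator 𝒥 equals 3/5. -/
open MeasureTheory Set Filter

noncomputable def Ffun (R : ℝ) : ℝ :=
  (-3*R^8 - 2*R^6 - (3/2)*R^4 - (3/5)*R^2 - 1/10) / (1 + R^2)^6

lemma hasDeriv (R : ℝ) :
    HasDerivAt Ffun (-12 * R^7 * (1 - R^2) / (1 + R^2)^7) R := by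
  have hnum : HasDerivAt (fun x : ℝ => -3*x^8 - 2*x^6 - (3/2)*x^4 - (3/5)*x^2 - 1/10)
      (-24*R^7 - 12*R^5 - 6*R^3 - (6/5)*R) R := by
    have := ((((hasDerivAt_pow 8 R).const_mul (-3:ℝ)).sub ((hasDerivAt_pow 6 R).const_mul (2:ℝ))).sub
        ((hasDerivAt_pow 4 R).const_mul ((3:ℝ)/2))).sub ((hasDerivAt_pow 2 R).const_mul ((3:ℝ)/5))
    have := this.sub_const (1/10)
    refine this.congr_deriv ?_; ring
  have hden : HasDerivAt (fun x : ℝ => (1 + x^2)^6) (6*(1+R^2)^5*(2*R)) R := by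
    have h1 : HasDerivAt (fun x : ℝ => 1 + x^2) (2*R) R := by
      simpa using (hasDerivAt_pow 2 R).const_add 1
    exact (hasDerivAt_pow 6 (1+R^2)).comp R h1
  have := hnum.div hden (by positivity)
  refine this.congr_deriv ?_
  have h0 : (1 + R^2) ≠ 0 := by positivity
  field_simp
  ring

lemma tendstoF : Filter.Tendsto Ffun Filter.atTop (nhds 0) := by
  apply squeeze_zero_norm' (a := fun R : ℝ => 8 / R^4)
  · filter_upwards [Filter.eventually_ge_atTop (1:ℝ)] with R hR
    have hR0 : (0:ℝ) < R := lt_of_lt_of_le one_pos hR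
    rw [Ffun, Real.norm_eq_abs, abs_div, abs_of_pos (a := ((1:ℝ)+R^2)^6) (by positivity), div_le_div_iff₀ (by positivity) (by positivity)]
    have h1 : |(-3*R^8 - 2*R^6 - (3/2)*R^4 - (3/5)*R^2 - 1/10 : ℝ)| ≤ 8 * R^8 := by
      rw [abs_le]
      constructor <;> nlinarith [pow_le_pow_right₀ hR (by norm_num : (2:ℕ) ≤ 8),
        pow_le_pow_right₀ hR (by norm_num : (4:ℕ) ≤ 8), pow_le_pow_right₀ hR (by norm_num : (6:ℕ) ≤ 8),
        one_le_pow₀ hR (n := 8)]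
    calc |(-3*R^8 - 2*R^6 - (3/2)*R^4 - (3/5)*R^2 - 1/10 : ℝ)| * R^4 ≤ 8 * R^8 * R^4 :=
          mul_le_mul_of_nonneg_right h1 (by positivity)
      _ = 8 * R^12 := by ring
      _ ≤ 8 * (1+R^2)^6 := by
          have : R^12 ≤ (1+R^2)^6 := by
            calc R^12 = (R^2)^6 := by ring
              _ ≤ (1+R^2)^6 := pow_le_pow_left₀ (by positivity) (by nlinarith) 6
          linarith
  · have : Filter.Tendsto (fun R : ℝ => R^4) Filter.atTop Filter.atTop :=
      tendsto_pow_atTop (by norm_num)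
    simpa using this.const_div_atTop 8

lemma integrable_f : MeasureTheory.IntegrableOn
    (fun R : ℝ => -12 * R^7 * (1 - R^2) / (1 + R^2)^7) (Set.Ioi 0) := by
  have hint : MeasureTheory.Integrable (fun x : ℝ => 12 * (1 + x^2)⁻¹) := by
    simpa using integrable_inv_one_add_sq.const_mul 12
  apply ((hint.restrict (s := Set.Ioi 0)).mono ?_ ?_)
  · apply Continuous.aestronglyMeasurable
    apply Continuous.div (by continuity) (by continuity)
    intro x; positivity
  · refine Filter.Eventually.of_forall fun R => ?_
    have hb : (0:ℝ) ≤ |R| := abs_nonneg R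
    have hb2 : R^2 = |R|^2 := (sq_abs R).symm
    rw [Real.norm_eq_abs, Real.norm_eq_abs, abs_div, abs_of_pos (a := (1+R^2)^7) (by positivity),
      abs_mul, abs_mul, abs_of_nonneg (a := (12:ℝ) * (1+R^2)⁻¹) (by positivity),
      div_le_iff₀ (by positivity)]
    have h1 : |(-12:ℝ)| * |R^7| ≤ 12 * |R|^7 := by rw [abs_pow]; norm_num
    have h2 : |1 - R^2| ≤ 1 + |R|^2 := by
      rw [hb2] at *; rw [abs_sub_comm, abs_le]; constructor <;> nlinarith
    have h3 : |R|^7 ≤ (1 + |R|^2)^4 := by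
      nlinarith [sq_nonneg (|R|^4 - |R|^3/2), pow_nonneg hb 2, pow_nonneg hb 4, pow_nonneg hb 6]
    have hinv : (1+|R|^2)⁻¹ * (1+|R|^2)^7 = (1+|R|^2)^6 := by
      have hpos : (0:ℝ) < 1 + |R|^2 := by positivity
      field_simp
    calc |(-12:ℝ)| * |R^7| * |1-R^2| ≤ (12 * |R|^7) * (1 + |R|^2) :=
          mul_le_mul h1 h2 (abs_nonneg _) (by positivity)
      _ ≤ 12 * (1+|R|^2)⁻¹ * (1+|R|^2)^7 := by
          rw [mul_assoc 12, mul_assoc 12, hinv]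
          have h4 : |R|^7 * (1 + |R|^2) ≤ (1 + |R|^2)^4 * (1 + |R|^2) :=
            mul_le_mul_of_nonneg_right h3 (by positivity)
          have h5 : (1 + |R|^2)^5 ≤ (1 + |R|^2)^6 :=
            pow_le_pow_right₀ (by nlinarith) (by norm_num)
          nlinarith
      _ = 12 * (1+R^2)⁻¹ * (1+R^2)^7 := by rw [hb2]

theorem potential_correction_matrix_element :
    (∫ R in Set.Ioi (0 : ℝ),
        (-12 * R ^ 2 * (1 - R ^ 2) / (1 + R ^ 2) ^ 3) * (phi0 R) ^ 2) = 1 / 10 ∧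
    (1 / 10 : ℝ) / (1 / 6) = 3 / 5 := by
  constructor
  · have hcong : ∫ R in Set.Ioi (0 : ℝ),
        (-12 * R ^ 2 * (1 - R ^ 2) / (1 + R ^ 2) ^ 3) * (phi0 R) ^ 2
        = ∫ R in Set.Ioi (0 : ℝ), -12 * R^7 * (1 - R^2) / (1 + R^2)^7 := by
      apply MeasureTheory.setIntegral_congr_fun measurableSet_Ioi
      intro R hR
      have hR0 : (0:ℝ) < R := hR
      have h52 : (R ^ ((5:ℝ)/2))^2 = R^5 := by
        rw [← Real.rpow_natCast (R ^ ((5:ℝ)/2)) 2, ← Real.rpow_mul hR0.le,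
          ← Real.rpow_natCast R 5]
        norm_num
      have hden : (1 + R^2) ≠ 0 := by positivity
      simp only [phi0, div_pow, h52]
      field_simp
    rw [hcong, MeasureTheory.integral_Ioi_of_hasDerivAt_of_tendsto'
      (fun x _ => hasDeriv x) integrable_f tendstoF]
    norm_num [Ffun]
  · norm_num
end

section
/- Pointwise bound for spherically symmetric functions in ℝ²: for every continuously differentiable compactly supported function u : (0,∞) → ℝ and every r > 0, u(r)² ≤ 2 ( ∫₀^∞ u'(s)² s ds )^{1/2} ( ∫₀^∞ (u(s)²/s²) s ds )^{1/2}. In particular ‖u‖_∞² ≲ ‖∂ᵣu‖_{L²(r dr)} ‖u/r‖_{L²(r dr)}. -/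
open MeasureTheory Set Filter Topology

/- STATEMENT 18: pointwise bound for spherically symmetric functions in ℝ²:
for C¹ compactly supported u on (0,∞),
u(r)² ≤ 2 (∫₀^∞ u'(s)² s ds)^{1/2} (∫₀^∞ (u(s)²/s²) s ds)^{1/2}. -/

theorem radial_pointwise_bound (u : ℝ → ℝ) (hu : ContDiff ℝ 1 u)
    (hcomp : HasCompactSupport u) (hsupp : tsupport u ⊆ Set.Ioi 0)
    (r : ℝ) (hr : 0 < r) :
    (u r) ^ 2 ≤
      2 * Real.sqrt (∫ s in Set.Ioi (0 : ℝ), (deriv u s) ^ 2 * s)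
        * Real.sqrt (∫ s in Set.Ioi (0 : ℝ), ((u s) ^ 2 / s ^ 2) * s) := by
  have hucont : Continuous u := hu.continuous
  have hu'cont : Continuous (deriv u) := hu.continuous_deriv le_rfl
  -- ε below the support
  obtain ⟨ε, hε, hεsupp⟩ : ∃ ε : ℝ, 0 < ε ∧ ∀ s : ℝ, s < ε → u s = 0 := by
    rcases eq_empty_or_nonempty (tsupport u) with h | h
    · exact ⟨1, one_pos, fun s _ => image_eq_zero_of_notMem_tsupport (by simp [h])⟩
    · exact ⟨sInf (tsupport u), hsupp (hcomp.sInf_mem h), fun s hs =>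
        image_eq_zero_of_notMem_tsupport (fun hmem =>
          absurd (csInf_le hcomp.isBounded.bddBelow hmem) (not_le.2 hs))⟩
  set F : ℝ → ℝ := fun s => |deriv u s| * Real.sqrt s with hF
  set G : ℝ → ℝ := fun s => |u s| / Real.sqrt s with hG
  have hFcont : Continuous F := (hu'cont.abs).mul Real.continuous_sqrt
  -- integrability facts
  have hI1 : Integrable (fun s : ℝ => deriv u s ^ 2 * s) := by
    have hcs : HasCompactSupport (fun s : ℝ => deriv u s ^ 2 * s) := by
      have h1 : HasCompactSupport ((deriv u) * (fun s : ℝ => deriv u s * s)) :=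
        hcomp.deriv.mul_right
      have : (fun s : ℝ => deriv u s ^ 2 * s) = (deriv u) * (fun s : ℝ => deriv u s * s) := by
        funext s; simp [Pi.mul_apply]; ring
      rw [this]; exact h1
    exact ((hu'cont.pow 2).mul continuous_id).integrable_of_hasCompactSupport hcs
  have hI2 : Integrable (fun s : ℝ => u s * (2 * deriv u s)) := by
    have hcs : HasCompactSupport (fun s : ℝ => u s * (2 * deriv u s)) :=
      hcomp.mul_right
    exact (hucont.mul (continuous_const.mul hu'cont)).integrable_of_hasCompactSupport hcs
  have hIuu' : Integrable (fun s : ℝ => |u s| * |deriv u s|) := by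
    have hcs : HasCompactSupport (fun s : ℝ => |u s| * |deriv u s|) :=
      hcomp.abs.mul_right
    exact (hucont.abs.mul hu'cont.abs).integrable_of_hasCompactSupport hcs
  have hI3 : IntegrableOn (fun s : ℝ => u s ^ 2 / s) (Ioi 0) := by
    set v : ℝ → ℝ := fun s => u s ^ 2 * (max s ε)⁻¹ with hv
    have hvcont : Continuous v :=
      (hucont.pow 2).mul ((continuous_id.max continuous_const).inv₀
        fun x => (lt_of_lt_of_le hε (le_max_right x ε)).ne')
    have hvcs : HasCompactSupport v := by
      have h1 : HasCompactSupport (u * (fun s : ℝ => u s * (max s ε)⁻¹)) := hcomp.mul_right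
      have : v = u * (fun s : ℝ => u s * (max s ε)⁻¹) := by
        funext s; simp [hv, Pi.mul_apply]; ring
      rw [this]; exact h1
    have hvint : IntegrableOn v (Ioi 0) :=
      (hvcont.integrable_of_hasCompactSupport hvcs).integrableOn
    refine hvint.congr_fun (fun s hs => ?_) measurableSet_Ioi
    rcases lt_or_ge s ε with h | h
    · simp [hv, hεsupp s h]
    · rw [hv]; simp only [max_eq_left h, div_eq_mul_inv]
  -- pointwise identities on Ioi 0
  have hF2 : EqOn (fun s => F s ^ 2) (fun s : ℝ => deriv u s ^ 2 * s) (Ioi 0) := by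
    intro s hs
    simp only [hF, mul_pow, sq_abs, Real.sq_sqrt (le_of_lt hs)]
  have hG2 : EqOn (fun s => G s ^ 2) (fun s : ℝ => u s ^ 2 / s) (Ioi 0) := by
    intro s hs
    simp only [hG, div_pow, sq_abs, Real.sq_sqrt (le_of_lt hs)]
  -- Memℒp
  have h2 : (ENNReal.ofReal (2 : ℝ)) = 2 := by norm_num
  have hFmem : MemLp F (ENNReal.ofReal (2:ℝ)) (volume.restrict (Ioi 0)) := by
    rw [h2]
    refine (memLp_two_iff_integrable_sq hFcont.aestronglyMeasurable).2 ?_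
    exact (hI1.integrableOn.congr_fun (fun s hs => (hF2 hs).symm) measurableSet_Ioi)
  have hGmem : MemLp G (ENNReal.ofReal (2:ℝ)) (volume.restrict (Ioi 0)) := by
    rw [h2]
    have hGmeas : AEStronglyMeasurable G (volume.restrict (Ioi (0:ℝ))) :=
      ((hucont.abs.measurable).div Real.continuous_sqrt.measurable).aestronglyMeasurable
    refine (memLp_two_iff_integrable_sq hGmeas).2 ?_
    exact (hI3.congr_fun (fun s hs => (hG2 hs).symm) measurableSet_Ioi)
  -- Cauchy-Schwarz
  have hpq : Real.HolderConjugate 2 2 := Real.HolderConjugate.two_two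
  have hCS := integral_mul_le_Lp_mul_Lq_of_nonneg (μ := volume.restrict (Ioi 0)) hpq
    (Eventually.of_forall (fun x => by positivity))
    (Eventually.of_forall (fun x => by positivity)) hFmem hGmem
  have hCS' : ∫ s in Ioi (0:ℝ), F s * G s ≤
      Real.sqrt (∫ s in Ioi (0:ℝ), deriv u s ^ 2 * s) *
        Real.sqrt (∫ s in Ioi (0:ℝ), u s ^ 2 / s) := by
    have e1 : ∫ s in Ioi (0:ℝ), F s ^ (2:ℝ) = ∫ s in Ioi (0:ℝ), deriv u s ^ 2 * s := by
      refine setIntegral_congr_fun measurableSet_Ioi (fun s hs => ?_)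
      rw [Real.rpow_two]; exact hF2 hs
    have e2 : ∫ s in Ioi (0:ℝ), G s ^ (2:ℝ) = ∫ s in Ioi (0:ℝ), u s ^ 2 / s := by
      refine setIntegral_congr_fun measurableSet_Ioi (fun s hs => ?_)
      rw [Real.rpow_two]; exact hG2 hs
    calc ∫ s in Ioi (0:ℝ), F s * G s
        ≤ (∫ s in Ioi (0:ℝ), F s ^ (2:ℝ)) ^ ((1:ℝ)/2) *
            (∫ s in Ioi (0:ℝ), G s ^ (2:ℝ)) ^ ((1:ℝ)/2) := hCS
      _ = _ := by rw [e1, e2, ← Real.sqrt_eq_rpow, ← Real.sqrt_eq_rpow]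
  -- fundamental theorem of calculus
  have key : u r ^ 2 = - ∫ s in Ioi r, u s * (2 * deriv u s) := by
    have hderiv : ∀ x ∈ Ioi r, HasDerivAt (fun s => u s ^ 2) (u x * (2 * deriv u x)) x := by
      intro x _
      have h := ((hu.differentiable one_ne_zero) x).hasDerivAt
      have h2 := h.fun_pow 2
      refine h2.congr_deriv ?_
      push_cast
      ring
    have htend : Tendsto (fun s => u s ^ 2) atTop (𝓝 0) := by
      obtain ⟨M, hM⟩ := hcomp.isBounded.bddAbove
      have hev : (fun s => u s ^ 2) =ᶠ[atTop] (fun _ => (0:ℝ)) := by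
        filter_upwards [eventually_gt_atTop M] with s hs
        rw [image_eq_zero_of_notMem_tsupport (fun hmem => absurd (hM hmem) (not_le.2 hs))]
        norm_num
      exact Tendsto.congr' hev.symm tendsto_const_nhds
    have := integral_Ioi_of_hasDerivAt_of_tendsto
      ((hucont.pow 2).continuousWithinAt) hderiv hI2.integrableOn htend
    simp only [zero_sub, Pi.pow_apply] at this
    linarith
  -- main chain
  have main : u r ^ 2 ≤ 2 * ∫ s in Ioi (0:ℝ), F s * G s := by
    calc u r ^ 2 = ∫ s in Ioi r, -(u s * (2 * deriv u s)) := by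
          rw [integral_neg]; exact key
      _ ≤ ∫ s in Ioi r, 2 * (|u s| * |deriv u s|) := by
          refine setIntegral_mono_on hI2.neg.integrableOn
            ((hIuu'.const_mul 2).integrableOn) measurableSet_Ioi (fun x _ => ?_)
          have h1 : u x * (2 * deriv u x) = 2 * (u x * deriv u x) := by ring
          have h2 := neg_abs_le (u x * deriv u x)
          rw [abs_mul] at h2
          rw [h1]
          linarith
      _ ≤ ∫ s in Ioi (0:ℝ), 2 * (|u s| * |deriv u s|) := by
          refine setIntegral_mono_set ((hIuu'.const_mul 2).integrableOn)
            (Eventually.of_forall (fun x => by positivity))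
            ((Ioi_subset_Ioi hr.le).eventuallyLE)
      _ = 2 * ∫ s in Ioi (0:ℝ), |u s| * |deriv u s| := by rw [integral_const_mul]
      _ = 2 * ∫ s in Ioi (0:ℝ), F s * G s := by
          congr 1
          refine setIntegral_congr_fun measurableSet_Ioi (fun s hs => ?_)
          have hs0 : Real.sqrt s ≠ 0 := (Real.sqrt_pos.2 hs).ne'
          simp only [hF, hG]
          field_simp
  have hlast : ∫ s in Ioi (0:ℝ), u s ^ 2 / s = ∫ s in Ioi (0:ℝ), (u s ^ 2 / s ^ 2) * s := by
    refine setIntegral_congr_fun measurableSet_Ioi (fun s hs => ?_)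
    have hs0 : s ≠ 0 := hs.ne'
    field_simp
  calc u r ^ 2 ≤ 2 * ∫ s in Ioi (0:ℝ), F s * G s := main
    _ ≤ 2 * (Real.sqrt (∫ s in Ioi (0:ℝ), deriv u s ^ 2 * s) *
          Real.sqrt (∫ s in Ioi (0:ℝ), u s ^ 2 / s)) := by
        exact mul_le_mul_of_nonneg_left hCS' (by norm_num)
    _ = _ := by rw [hlast, mul_assoc]
end

section
/- Let β > 0 and, in the rescaled time variable τ > 0, set λ(τ) = ((β+1)τ)^{β/(β+1)} exp( ((β+1)τ)^{1/(β+1)} ) and ω(τ) = λ'(τ)/λ(τ) = (β/(β+1)) τ^{-1} + ((β+1)τ)^{-β/(β+1)}. Then: (i) ∫_τ^∞ λ(s)^{-1} ds is finite for every τ > 0; (ii) for every σ ∈ (τ, ∞] the function U₀(τ,σ) = λ(τ) ∫_τ^σ λ(s)^{-1} ds satisfies ∂_τ U₀(τ,σ) − ω(τ) U₀(τ,σ) = −1, hence ∂_τ( ∂_τ − ω(τ) ) U₀(·,σ) = 0, with U₀(σ,σ) = 0 and ∂_τU₀(τ,σ)|_{τ=σ} = −1; (iii) there is a constant C = C(β)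 such that λ(τ) ∫_τ^∞ λ(s)^{-1} ds ≤ C / ω(τ) for all τ ≥ 1. -/
/- STATEMENT 19: properties of the rescaled blow-up rate
λ(τ) = ((β+1)τ)^{β/(β+1)} exp(((β+1)τ)^{1/(β+1)}) and of
ω(τ) = λ'(τ)/λ(τ) = (β/(β+1))τ⁻¹ + ((β+1)τ)^{−β/(β+1)}:
(i) ∫_τ^∞ λ(s)⁻¹ ds < ∞;
(ii) U₀(τ,σ) = λ(τ)∫_τ^σ λ(s)⁻¹ ds satisfies ∂_τU₀ − ωU₀ = −1, hence
∂_τ(∂_τ − ω)U₀ = 0, with U₀(σ,σ) = 0 and ∂_τU₀|_{τ=σ} = −1 (the case σ = ∞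
being included via the Ioi-integral);
(iii) λ(τ)∫_τ^∞ λ(s)⁻¹ ds ≤ C/ω(τ) for τ ≥ 1. -/

/-- The blow-up rate in rescaled time,
`λ(τ) = ((β+1)τ)^{β/(β+1)} exp(((β+1)τ)^{1/(β+1)})`. -/
noncomputable def lamTau (β τ : ℝ) : ℝ :=
  ((β + 1) * τ) ^ (β / (β + 1)) * Real.exp (((β + 1) * τ) ^ (1 / (β + 1)))

/-- `ω(τ) = (β/(β+1))τ⁻¹ + ((β+1)τ)^{−β/(β+1)}`. -/
noncomputable def omTau (β τ : ℝ) : ℝ :=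
  (β / (β + 1)) * τ⁻¹ + ((β + 1) * τ) ^ (-(β / (β + 1)))

/-- The backward fundamental solution `U₀(τ,σ) = λ(τ)∫_τ^σ λ(s)⁻¹ ds`. -/
noncomputable def U0 (β τ σ : ℝ) : ℝ := lamTau β τ * ∫ s in τ..σ, (lamTau β s)⁻¹

section Aux
open Real MeasureTheory Set Filter

noncomputable def Fneg (β τ : ℝ) : ℝ := Real.exp (-(((β + 1) * τ) ^ (1 / (β + 1))))

lemma lam_pos (β : ℝ) (hβ : 0 < β) {τ : ℝ} (hτ : 0 < τ) : 0 < lamTau β τ := by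
  have h : 0 < (β + 1) * τ := by positivity
  exact mul_pos (Real.rpow_pos_of_pos h _) (Real.exp_pos _)

lemma om_pos (β : ℝ) (hβ : 0 < β) {τ : ℝ} (hτ : 0 < τ) : 0 < omTau β τ := by
  have h : 0 < (β + 1) * τ := by positivity
  have h1 : 0 < (β / (β + 1)) * τ⁻¹ := by positivity
  have h2 : 0 < ((β + 1) * τ) ^ (-(β / (β + 1))) := Real.rpow_pos_of_pos h _
  unfold omTau; linarith

lemma hasDerivAt_lamTau (β : ℝ) (hβ : 0 < β) {τ : ℝ} (hτ : 0 < τ) :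
    HasDerivAt (lamTau β) (omTau β τ * lamTau β τ) τ := by
  have hc : (0:ℝ) < β + 1 := by linarith
  have hcτ : 0 < (β + 1) * τ := mul_pos hc hτ
  have h1 : HasDerivAt (fun t : ℝ => (β + 1) * t) (β + 1) τ := by
    simpa using (hasDerivAt_id τ).const_mul (β + 1)
  have h2 : HasDerivAt (fun t : ℝ => ((β + 1) * t) ^ (β / (β + 1)))
      ((β / (β + 1)) * ((β + 1) * τ) ^ (β / (β + 1) - 1) * (β + 1)) τ :=
    (Real.hasDerivAt_rpow_const (Or.inl hcτ.ne')).comp τ h1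
  have h3 : HasDerivAt (fun t : ℝ => ((β + 1) * t) ^ (1 / (β + 1)))
      ((1 / (β + 1)) * ((β + 1) * τ) ^ (1 / (β + 1) - 1) * (β + 1)) τ :=
    (Real.hasDerivAt_rpow_const (Or.inl hcτ.ne')).comp τ h1
  have h4 := h2.mul h3.exp
  have key1 : ((β + 1) * τ) ^ (β / (β + 1) - 1)
      = ((β + 1) * τ) ^ (β / (β + 1)) * ((β + 1) * τ)⁻¹ := by
    rw [Real.rpow_sub hcτ, Real.rpow_one, div_eq_mul_inv]
  have key2 : ((β + 1) * τ) ^ (β / (β + 1)) * ((β + 1) * τ) ^ (1 / (β + 1) - 1) = 1 := by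
    rw [← Real.rpow_add hcτ, show β / (β + 1) + (1 / (β + 1) - 1) = 0 by
      (field_simp; ring), Real.rpow_zero]
  have key3 : ((β + 1) * τ) ^ (-(β / (β + 1))) * ((β + 1) * τ) ^ (β / (β + 1)) = 1 := by
    rw [← Real.rpow_add hcτ, neg_add_cancel, Real.rpow_zero]
  refine h4.congr_deriv ?_
  unfold omTau lamTau
  rw [key1]
  have e1 : (β / (β + 1)) * (((β + 1) * τ) ^ (β / (β + 1)) * ((β + 1) * τ)⁻¹) * (β + 1)
      = (β / (β + 1)) * τ⁻¹ * ((β + 1) * τ) ^ (β / (β + 1)) := by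
    rw [mul_inv]
    field_simp
  rw [e1]
  have e2 : ((β + 1) * τ) ^ (β / (β + 1)) *
      (Real.exp (((β + 1) * τ) ^ (1 / (β + 1))) *
        ((1 / (β + 1)) * ((β + 1) * τ) ^ (1 / (β + 1) - 1) * (β + 1)))
      = Real.exp (((β + 1) * τ) ^ (1 / (β + 1))) := by
    have : (1 / (β + 1)) * ((β + 1) * τ) ^ (1 / (β + 1) - 1) * (β + 1)
        = ((β + 1) * τ) ^ (1 / (β + 1) - 1) := by field_simp
    rw [this, show ((β + 1) * τ) ^ (β / (β + 1)) *
      (Real.exp (((β + 1) * τ) ^ (1 / (β + 1))) * ((β + 1) * τ) ^ (1 / (β + 1) - 1))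
      = ((β + 1) * τ) ^ (β / (β + 1)) * ((β + 1) * τ) ^ (1 / (β + 1) - 1) *
        Real.exp (((β + 1) * τ) ^ (1 / (β + 1))) by ring, key2, one_mul]
  rw [e2]
  have e3 : (β / (β + 1) * τ⁻¹ + ((β + 1) * τ) ^ (-(β / (β + 1)))) *
      (((β + 1) * τ) ^ (β / (β + 1)) * Real.exp (((β + 1) * τ) ^ (1 / (β + 1))))
      = β / (β + 1) * τ⁻¹ * ((β + 1) * τ) ^ (β / (β + 1)) *
        Real.exp (((β + 1) * τ) ^ (1 / (β + 1)))
        + Real.exp (((β + 1) * τ) ^ (1 / (β + 1))) := by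
    rw [show (β / (β + 1) * τ⁻¹ + ((β + 1) * τ) ^ (-(β / (β + 1)))) *
      (((β + 1) * τ) ^ (β / (β + 1)) * Real.exp (((β + 1) * τ) ^ (1 / (β + 1))))
      = β / (β + 1) * τ⁻¹ * ((β + 1) * τ) ^ (β / (β + 1)) *
        Real.exp (((β + 1) * τ) ^ (1 / (β + 1)))
        + (((β + 1) * τ) ^ (-(β / (β + 1))) * ((β + 1) * τ) ^ (β / (β + 1))) *
          Real.exp (((β + 1) * τ) ^ (1 / (β + 1))) by ring, key3, one_mul]
  rw [e3]

lemma hasDerivAt_negF (β : ℝ) (hβ : 0 < β) {τ : ℝ} (hτ : 0 < τ) :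
    HasDerivAt (fun t => -Fneg β t) ((lamTau β τ)⁻¹) τ := by
  have hc : (0:ℝ) < β + 1 := by linarith
  have hcτ : 0 < (β + 1) * τ := mul_pos hc hτ
  have h1 : HasDerivAt (fun t : ℝ => (β + 1) * t) (β + 1) τ := by
    simpa using (hasDerivAt_id τ).const_mul (β + 1)
  have h3 : HasDerivAt (fun t : ℝ => ((β + 1) * t) ^ (1 / (β + 1)))
      ((1 / (β + 1)) * ((β + 1) * τ) ^ (1 / (β + 1) - 1) * (β + 1)) τ :=
    (Real.hasDerivAt_rpow_const (Or.inl hcτ.ne')).comp τ h1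
  have h4 := (h3.neg.exp).neg
  have key : Real.exp (-(((β + 1) * τ) ^ (1 / (β + 1)))) *
      ((1 / (β + 1)) * ((β + 1) * τ) ^ (1 / (β + 1) - 1) * (β + 1))
      = (lamTau β τ)⁻¹ := by
    have e1 : (1 / (β + 1)) * ((β + 1) * τ) ^ (1 / (β + 1) - 1) * (β + 1)
        = ((β + 1) * τ) ^ (1 / (β + 1) - 1) := by field_simp
    have e2 : (1 : ℝ) / (β + 1) - 1 = -(β / (β + 1)) := by field_simp; ring
    rw [e1, e2]
    unfold lamTau
    rw [mul_inv, ← Real.exp_neg, Real.rpow_neg hcτ.le]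
    ring
  rw [show (fun t => -Fneg β t) = fun t => -Real.exp (-(((β + 1) * t) ^ (1 / (β + 1)))) from
    rfl, ← key]
  refine h4.congr_deriv ?_
  simp

lemma continuous_lam (β : ℝ) (hβ : 0 < β) : Continuous (lamTau β) := by
  have hc : (0:ℝ) < β + 1 := by linarith
  have h1 : Continuous fun t : ℝ => ((β + 1) * t) ^ (β / (β + 1)) := by
    refine continuous_iff_continuousAt.2 fun x => ?_
    exact (Real.continuousAt_rpow_const _ _ (Or.inr (by positivity))).comp
      (by fun_prop)
  have h2 : Continuous fun t : ℝ => ((β + 1) * t) ^ (1 / (β + 1)) := by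
    refine continuous_iff_continuousAt.2 fun x => ?_
    exact (Real.continuousAt_rpow_const _ _ (Or.inr (by positivity))).comp
      (by fun_prop)
  exact h1.mul (Real.continuous_exp.comp h2)

lemma continuous_Fneg (β : ℝ) (hβ : 0 < β) : Continuous (Fneg β) := by
  have h2 : Continuous fun t : ℝ => ((β + 1) * t) ^ (1 / (β + 1)) := by
    refine continuous_iff_continuousAt.2 fun x => ?_
    exact (Real.continuousAt_rpow_const _ _ (Or.inr (by positivity))).comp
      (by fun_prop)
  exact Real.continuous_exp.comp h2.neg

lemma tendsto_Fneg (β : ℝ) (hβ : 0 < β) : Tendsto (Fneg β) atTop (nhds 0) := by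
  have hc : (0:ℝ) < β + 1 := by linarith
  have ht : Tendsto (fun t : ℝ => ((β + 1) * t) ^ (1 / (β + 1))) atTop atTop :=
    (tendsto_rpow_atTop (by positivity)).comp
      (Filter.tendsto_id.const_mul_atTop hc)
  exact Real.tendsto_exp_atBot.comp (tendsto_neg_atTop_atBot.comp ht)

lemma integrable_inv_lam (β : ℝ) (hβ : 0 < β) {τ : ℝ} (hτ : 0 < τ) :
    IntegrableOn (fun s => (lamTau β s)⁻¹) (Set.Ioi τ) := by
  refine MeasureTheory.integrableOn_Ioi_deriv_of_nonneg (l := 0)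
    ((continuous_Fneg β hβ).neg.continuousWithinAt)
    (fun x hx => hasDerivAt_negF β hβ (hτ.trans hx))
    (fun x hx => inv_nonneg.2 (lam_pos β hβ (hτ.trans hx)).le) ?_
  exact (by simpa using (tendsto_Fneg β hβ).neg : Tendsto (fun x => -Fneg β x) atTop (nhds 0))

lemma integral_Ioi_inv_lam (β : ℝ) (hβ : 0 < β) {τ : ℝ} (hτ : 0 < τ) :
    ∫ s in Set.Ioi τ, (lamTau β s)⁻¹ = Fneg β τ := by
  have := MeasureTheory.integral_Ioi_of_hasDerivAt_of_nonneg
    ((continuous_Fneg β hβ).neg.continuousWithinAt)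
    (fun x hx => hasDerivAt_negF β hβ (hτ.trans hx))
    (fun x hx => inv_nonneg.2 (lam_pos β hβ (hτ.trans hx)).le)
    (by simpa using (tendsto_Fneg β hβ).neg : Tendsto (fun x => -Fneg β x) atTop (nhds 0))
  simpa using this

lemma intervalIntegral_inv_lam (β : ℝ) (hβ : 0 < β) {τ σ : ℝ} (hτ : 0 < τ) (hσ : 0 < σ) :
    ∫ s in τ..σ, (lamTau β s)⁻¹ = Fneg β τ - Fneg β σ := by
  have hpos : ∀ x ∈ Set.uIcc τ σ, 0 < x := fun x hx =>
    lt_of_lt_of_le (lt_min hτ hσ) hx.1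
  have hint : IntervalIntegrable (fun s => (lamTau β s)⁻¹) volume τ σ := by
    refine (ContinuousOn.inv₀ (continuous_lam β hβ).continuousOn
      (fun x hx => (lam_pos β hβ (hpos x hx)).ne')).intervalIntegrable
  have := intervalIntegral.integral_eq_sub_of_hasDerivAt
    (f := fun t => -Fneg β t) (fun x hx => hasDerivAt_negF β hβ (hpos x hx)) hint
  rw [this]; ring

lemma lam_mul_F (β τ : ℝ) :
    lamTau β τ * Fneg β τ = ((β + 1) * τ) ^ (β / (β + 1)) := by
  unfold lamTau Fneg
  rw [mul_assoc, ← Real.exp_add, add_neg_cancel, Real.exp_zero, mul_one]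

lemma hasDerivAt_U0 (β : ℝ) (hβ : 0 < β) {σ τ : ℝ} (hσ : 0 < σ) (hτ : 0 < τ) :
    HasDerivAt (fun x => U0 β x σ) (omTau β τ * U0 β τ σ - 1) τ := by
  have heq : (fun x => lamTau β x * (Fneg β x - Fneg β σ)) =ᶠ[nhds τ]
      fun x => U0 β x σ := by
    filter_upwards [Ioi_mem_nhds hτ] with x hx
    rw [U0, intervalIntegral_inv_lam β hβ hx hσ]
  have hF : HasDerivAt (fun x => Fneg β x - Fneg β σ) (-(lamTau β τ)⁻¹) τ := by
    have h := (hasDerivAt_negF β hβ hτ).neg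
    simp only [neg_neg, Pi.neg_def] at h
    simpa using h.sub_const (Fneg β σ)
  have h := (hasDerivAt_lamTau β hβ hτ).mul hF
  have h2 : HasDerivAt (fun x => lamTau β x * (Fneg β x - Fneg β σ))
      (omTau β τ * U0 β τ σ - 1) τ := by
    refine h.congr_deriv ?_
    rw [U0, intervalIntegral_inv_lam β hβ hτ hσ]
    have hlam : lamTau β τ * (lamTau β τ)⁻¹ = 1 :=
      mul_inv_cancel₀ (lam_pos β hβ hτ).ne'
    have : lamTau β τ * -(lamTau β τ)⁻¹ = -1 := by
      rw [mul_neg, hlam]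
    rw [this]; ring
  exact h2.congr_of_eventuallyEq heq.symm

lemma hasDerivAt_U0_inf (β : ℝ) (hβ : 0 < β) {τ : ℝ} (hτ : 0 < τ) :
    HasDerivAt (fun x => lamTau β x * ∫ s in Set.Ioi x, (lamTau β s)⁻¹)
      (omTau β τ * (lamTau β τ * ∫ s in Set.Ioi τ, (lamTau β s)⁻¹) - 1) τ := by
  have heq : (fun x => lamTau β x * Fneg β x) =ᶠ[nhds τ]
      fun x => lamTau β x * ∫ s in Set.Ioi x, (lamTau β s)⁻¹ := by
    filter_upwards [Ioi_mem_nhds hτ] with x hx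
    rw [integral_Ioi_inv_lam β hβ hx]
  have hF : HasDerivAt (Fneg β) (-(lamTau β τ)⁻¹) τ := by
    have h := (hasDerivAt_negF β hβ hτ).neg
    simp only [neg_neg, Pi.neg_def] at h
    exact h
  have h := (hasDerivAt_lamTau β hβ hτ).mul hF
  have h2 : HasDerivAt (fun x => lamTau β x * Fneg β x)
      (omTau β τ * (lamTau β τ * ∫ s in Set.Ioi τ, (lamTau β s)⁻¹) - 1) τ := by
    refine h.congr_deriv ?_
    rw [integral_Ioi_inv_lam β hβ hτ]
    have hlam : lamTau β τ * (lamTau β τ)⁻¹ = 1 :=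
      mul_inv_cancel₀ (lam_pos β hβ hτ).ne'
    have : lamTau β τ * -(lamTau β τ)⁻¹ = -1 := by
      rw [mul_neg, hlam]
    rw [this]; ring
  exact h2.congr_of_eventuallyEq heq.symm


end Aux

open Filter in
theorem backward_fundamental_solution (β : ℝ) (hβ : 0 < β) :
    -- ω is the logarithmic derivative of λ
    (∀ τ > (0 : ℝ), deriv (lamTau β) τ / lamTau β τ = omTau β τ) ∧
    -- (i) integrability of λ⁻¹ at infinity
    (∀ τ > (0 : ℝ), MeasureTheory.IntegrableOn (fun s => (lamTau β s)⁻¹)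
      (Set.Ioi τ)) ∧
    -- (ii) the ODE for U₀(·,σ), finite σ
    (∀ σ > (0 : ℝ), ∀ τ > (0 : ℝ),
      deriv (fun x => U0 β x σ) τ - omTau β τ * U0 β τ σ = -1 ∧
      deriv (fun x => deriv (fun y => U0 β y σ) x - omTau β x * U0 β x σ) τ = 0) ∧
    -- (ii) boundary values at τ = σ
    (∀ σ > (0 : ℝ), U0 β σ σ = 0 ∧ deriv (fun x => U0 β x σ) σ = -1) ∧
    -- (ii) the ODE for the σ = ∞ case
    (∀ τ > (0 : ℝ),
      deriv (fun x => lamTau β x * ∫ s in Set.Ioi x, (lamTau β s)⁻¹) τ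
        - omTau β τ * (lamTau β τ * ∫ s in Set.Ioi τ, (lamTau β s)⁻¹) = -1) ∧
    -- (iii) the bound by C/ω
    (∃ C > (0 : ℝ), ∀ τ ≥ (1 : ℝ),
      lamTau β τ * ∫ s in Set.Ioi τ, (lamTau β s)⁻¹ ≤ C / omTau β τ) := by
  have hc : (0:ℝ) < β + 1 := by linarith
  have hODE : ∀ σ > (0 : ℝ), ∀ τ > (0 : ℝ),
      deriv (fun x => U0 β x σ) τ - omTau β τ * U0 β τ σ = -1 := by
    intro σ hσ τ hτ
    rw [(hasDerivAt_U0 β hβ hσ hτ).deriv]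
    ring
  refine ⟨?_, fun τ hτ => integrable_inv_lam β hβ hτ, ?_, ?_, ?_, ?_⟩
  · intro τ hτ
    rw [(hasDerivAt_lamTau β hβ hτ).deriv,
      mul_div_assoc, div_self (lam_pos β hβ hτ).ne', mul_one]
  · intro σ hσ τ hτ
    refine ⟨hODE σ hσ τ hτ, ?_⟩
    have hev : (fun x => deriv (fun y => U0 β y σ) x - omTau β x * U0 β x σ)
        =ᶠ[nhds τ] fun _ => (-1 : ℝ) := by
      filter_upwards [Ioi_mem_nhds hτ] with x hx
      exact hODE σ hσ x hx
    rw [hev.deriv_eq, deriv_const]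
  · intro σ hσ
    have h0 : U0 β σ σ = 0 := by
      rw [U0, intervalIntegral.integral_same, mul_zero]
    refine ⟨h0, ?_⟩
    have := hODE σ hσ σ hσ
    rw [h0] at this
    linarith
  · intro τ hτ
    rw [(hasDerivAt_U0_inf β hβ hτ).deriv]
    ring
  · refine ⟨β / (β + 1) * (β + 1) ^ (β / (β + 1)) + 1, by positivity, fun τ hτ => ?_⟩
    have hτ0 : (0:ℝ) < τ := lt_of_lt_of_le one_pos hτ
    have hωpos := om_pos β hβ hτ0
    rw [integral_Ioi_inv_lam β hβ hτ0, lam_mul_F β τ, le_div_iff₀ hωpos]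
    have hcτ : 0 < (β + 1) * τ := mul_pos hc hτ0
    have key3 : ((β + 1) * τ) ^ (β / (β + 1)) * ((β + 1) * τ) ^ (-(β / (β + 1))) = 1 := by
      rw [← Real.rpow_add hcτ, add_neg_cancel, Real.rpow_zero]
    have hsplit : ((β + 1) * τ) ^ (β / (β + 1))
        = (β + 1) ^ (β / (β + 1)) * τ ^ (β / (β + 1)) :=
      Real.mul_rpow hc.le hτ0.le
    have hτpow : τ ^ (β / (β + 1)) * τ⁻¹ = τ ^ (β / (β + 1) - 1) := by
      rw [Real.rpow_sub hτ0, Real.rpow_one, ← div_eq_mul_inv]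
    have hτle : τ ^ (β / (β + 1) - 1) ≤ 1 := by
      apply Real.rpow_le_one_of_one_le_of_nonpos hτ
      have : β / (β + 1) < 1 := by
        rw [div_lt_one hc]; linarith
      linarith
    have expand : ((β + 1) * τ) ^ (β / (β + 1)) * omTau β τ
        = β / (β + 1) * ((β + 1) ^ (β / (β + 1)) * τ ^ (β / (β + 1) - 1)) + 1 := by
      unfold omTau
      rw [mul_add, key3, hsplit, ← hτpow]
      ring
    rw [expand]
    have hb : (0:ℝ) < (β + 1) ^ (β / (β + 1)) := Real.rpow_pos_of_pos hc _
    have : (β + 1) ^ (β / (β + 1)) * τ ^ (β / (β + 1) - 1) ≤ (β + 1) ^ (β / (β + 1)) := by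
      nlinarith [Real.rpow_nonneg hτ0.le (β / (β + 1) - 1)]
    nlinarith [div_pos hβ hc]
end
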